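/- Let g and F be analytic on ℂ₊. Assume |exp(g(z))| ≤ C·e^{c|z|^{-β}} for all z ∈ 𝒞_γ, with constants C, c, γ > 0 and 0 ≤ β < 1. Suppose F satisfies |F(z)| ≤ A on ℂ₊, |F(t)| ≤ A·e^{-γ/t} for real 0 < t ≤ γ, and |F(z)| ≤ B·((Re z)/(4γ))^{-ν/2}·exp(-Re g(z)) for some ν > 0 and all z ∈ 𝒞_γ. Then |F(z)| ≤ e·B·(2γ/|z|)^ν·exp(-Re g(z) - Re(γ/z)) for all z ∈ 𝒞_γ. -/

import Mathlib

open Complex Filter Asymptotics Bornology Set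

lemma PL_re_cpow_nonneg {z : ℂ} (hz : 0 < z.re) {t : ℝ} (ht0 : 0 ≤ t) (ht1 : t ≤ 1) :
    0 ≤ ((z : ℂ) ^ (t : ℂ)).re := by
  have hz0 : z ≠ 0 := by intro h; simp [h] at hz
  rw [Complex.cpow_def_of_ne_zero hz0, Complex.exp_re]
  have harg : |z.arg| < Real.pi / 2 := Complex.abs_arg_lt_pi_div_two_iff.2 (Or.inl hz)
  have him : (Complex.log z * (t : ℂ)).im = t * z.arg := by
    simp [Complex.mul_im, Complex.log_im, mul_comm]
  rw [him]
  have habs : |t * z.arg| ≤ Real.pi / 2 := by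
    rw [abs_mul, _root_.abs_of_nonneg ht0]
    calc t * |z.arg| ≤ 1 * (Real.pi / 2) :=
          mul_le_mul ht1 harg.le (abs_nonneg _) zero_le_one
      _ = Real.pi / 2 := one_mul _
  have hcos : 0 ≤ Real.cos (t * z.arg) :=
    Real.cos_nonneg_of_mem_Icc ⟨by linarith [(abs_le.1 habs).1], (abs_le.1 habs).2⟩
  positivity

lemma PL_re_div (γ : ℝ) (u : ℂ) : ((γ : ℂ) / u).re = γ * u.re / Complex.normSq u := by
  rw [Complex.div_re]; simp

lemma PL_re_div_pos {γ : ℝ} (hγ : 0 < γ) {u : ℂ} (hu : 0 < u.re) : 0 < ((γ : ℂ) / u).re := by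
  rw [PL_re_div]
  have hu0 : u ≠ 0 := by intro h; simp [h] at hu
  have : 0 < Complex.normSq u := Complex.normSq_pos.2 hu0
  positivity

lemma PL_norm_div {γ : ℝ} (hγ : 0 ≤ γ) (u : ℂ) : ‖(γ : ℂ) / u‖ = γ / ‖u‖ := by
  rw [norm_div, Complex.norm_real, Real.norm_of_nonneg hγ]

lemma PL_norm_cpow_neg {u : ℂ} (hu : u ≠ 0) (ν : ℝ) : ‖u ^ (-(ν:ℂ))‖ = ‖u‖ ^ (-ν) := by
  rw [Complex.norm_cpow_of_ne_zero hu]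
  simp

lemma PL_div_div {K : Type*} [Field K] (a u : K) (ha : a ≠ 0) : a / (a / u) = u := by
  rcases eq_or_ne u 0 with rfl | hu
  · simp
  · field_simp

lemma PL_norm_damp (ε : ℝ) (ζ : ℂ) :
    ‖Complex.exp (-(ε:ℂ) * ζ)‖ = Real.exp (-(ε * ζ.re)) := by
  rw [Complex.norm_exp]
  congr 1
  simp [Complex.mul_re]

set_option maxHeartbeats 2000000 in
theorem phragmen_lindelof_disk_weighted
    (F g : ℂ → ℂ) (A B C c γ ν β : ℝ)
    (hA : 0 < A) (hB : 0 < B) (hC : 0 < C) (hc : 0 < c) (hγ : 0 < γ) (hν : 0 < ν)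
    (hβ0 : 0 ≤ β) (hβ1 : β < 1)
    (hFanal : DifferentiableOn ℂ F {z : ℂ | 0 < z.re})
    (hganal : DifferentiableOn ℂ g {z : ℂ | 0 < z.re})
    (hg : ∀ z : ℂ, z ≠ 0 → 1 ≤ ((γ : ℂ) / z).re →
      ‖Complex.exp (g z)‖ ≤ C * Real.exp (c * ‖z‖ ^ (-β)))
    (h1 : ∀ z : ℂ, 0 < z.re → ‖F z‖ ≤ A)
    (h2 : ∀ t : ℝ, 0 < t → t ≤ γ → ‖F t‖ ≤ A * Real.exp (-γ / t))
    (h3 : ∀ z : ℂ, z ≠ 0 → 1 ≤ ((γ : ℂ) / z).re →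
      ‖F z‖ ≤ B * (z.re / (4 * γ)) ^ (-(ν / 2)) * Real.exp (-((g z).re))) :
    ∀ z : ℂ, z ≠ 0 → 1 ≤ ((γ : ℂ) / z).re →
      ‖F z‖ ≤ Real.exp 1 * B * (2 * γ / ‖z‖) ^ ν *
        Real.exp (-((g z).re) - ((γ : ℂ) / z).re) := by
  have hγ0 : (γ : ℂ) ≠ 0 := Complex.ofReal_ne_zero.2 hγ.ne'
  set β' : ℝ := (β + 1) / 2 with hβ'def
  have hβ'pos : 0 < β' := by rw [hβ'def]; linarith
  have hββ' : β < β' := by rw [hβ'def]; linarith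
  have hβ'1 : β' < 1 := by rw [hβ'def]; linarith
  set f : ℂ → ℂ := fun w =>
    F ((γ : ℂ) / (w + 1)) * Complex.exp (g ((γ : ℂ) / (w + 1))) * Complex.exp (w + 1) *
      (2 * (w + 1)) ^ (-(ν : ℂ)) with hfdef
  -- norm formula for f
  have hnorm : ∀ w : ℂ, w + 1 ≠ 0 → ‖f w‖ =
      ‖F ((γ : ℂ) / (w + 1))‖ * ‖Complex.exp (g ((γ : ℂ) / (w + 1)))‖ *
        Real.exp ((w + 1).re) * ‖2 * (w + 1)‖ ^ (-ν) := by
    intro w hw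
    have h2w : (2 : ℂ) * (w + 1) ≠ 0 := by
      exact mul_ne_zero two_ne_zero hw
    rw [hfdef]
    rw [norm_mul, norm_mul, norm_mul, PL_norm_cpow_neg h2w ν,
      Complex.norm_exp (w+1)]
  -- positivity of the image point
  have hmaps : ∀ w : ℂ, -1 < w.re → 0 < ((γ : ℂ) / (w + 1)).re := by
    intro w hw
    exact PL_re_div_pos hγ (by simp only [Complex.add_re, Complex.one_re]; linarith)
  -- differentiability
  have hdiff : ∀ ε : ℝ,
      DiffContOnCl ℂ (fun w => f w * Complex.exp (-(ε:ℂ) * (w + 1) ^ (β' : ℂ)))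
        {w : ℂ | 0 < w.re} := by
    intro ε
    have hSopen : IsOpen {w : ℂ | -1 < w.re} := isOpen_lt continuous_const Complex.continuous_re
    have hu0 : ∀ w : ℂ, w ∈ {w : ℂ | -1 < w.re} → w + 1 ≠ 0 := by
      intro w hw h
      have : (w + 1).re = 0 := by rw [h]; simp
      simp only [Complex.add_re, Complex.one_re] at this
      simp only [mem_setOf_eq] at hw; linarith
    have hφ : DifferentiableOn ℂ (fun w : ℂ => (γ : ℂ) / (w + 1)) {w : ℂ | -1 < w.re} :=
      DifferentiableOn.div (differentiableOn_const _)
        ((differentiable_id.add_const 1).differentiableOn) hu0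
    have hmapsTo : MapsTo (fun w : ℂ => (γ : ℂ) / (w + 1)) {w : ℂ | -1 < w.re}
        {z : ℂ | 0 < z.re} := fun w hw => hmaps w hw
    have hF' : DifferentiableOn ℂ (fun w : ℂ => F ((γ : ℂ) / (w + 1))) {w : ℂ | -1 < w.re} :=
      hFanal.comp hφ hmapsTo
    have hg' : DifferentiableOn ℂ (fun w : ℂ => Complex.exp (g ((γ : ℂ) / (w + 1))))
        {w : ℂ | -1 < w.re} := (hganal.comp hφ hmapsTo).cexp
    have he1 : DifferentiableOn ℂ (fun w : ℂ => Complex.exp (w + 1)) {w : ℂ | -1 < w.re} :=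
      ((differentiable_id.add_const 1).cexp).differentiableOn
    have hcp : DifferentiableOn ℂ (fun w : ℂ => (2 * (w + 1)) ^ (-(ν : ℂ)))
        {w : ℂ | -1 < w.re} := by
      intro w hw
      refine (DifferentiableAt.cpow ?_ (differentiableAt_const _) ?_).differentiableWithinAt
      · exact (differentiableAt_id.add_const 1).const_mul 2
      · refine Complex.mem_slitPlane_iff.2 (Or.inl ?_)
        simp only [mem_setOf_eq] at hw
        simp only [Complex.mul_re, Complex.add_re, Complex.one_re]
        norm_num
        linarith
    have hdamp : DifferentiableOn ℂ (fun w : ℂ => Complex.exp (-(ε:ℂ) * (w + 1) ^ (β' : ℂ)))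
        {w : ℂ | -1 < w.re} := by
      apply DifferentiableOn.cexp
      apply DifferentiableOn.const_mul
      intro w hw
      refine (DifferentiableAt.cpow ?_ (differentiableAt_const _) ?_).differentiableWithinAt
      · exact differentiableAt_id.add_const 1
      · refine Complex.mem_slitPlane_iff.2 (Or.inl ?_)
        simp only [mem_setOf_eq] at hw
        simp only [Complex.add_re, Complex.one_re]
        linarith
    have : DifferentiableOn ℂ (fun w => f w * Complex.exp (-(ε:ℂ) * (w + 1) ^ (β' : ℂ)))
        {w : ℂ | -1 < w.re} := (((hF'.mul hg').mul he1).mul hcp).mul hdamp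
    refine DifferentiableOn.diffContOnCl (this.mono ?_)
    rw [Complex.closure_setOf_lt_re]
    intro z hz
    simp only [mem_setOf_eq] at hz ⊢
    linarith
    -- growth bound
  have hgrowth : ∀ ε : ℝ, 0 ≤ ε →
      (fun w => f w * Complex.exp (-(ε:ℂ) * (w + 1) ^ (β' : ℂ)))
        =O[cobounded ℂ ⊓ Filter.principal {z : ℂ | 0 < z.re}]
        fun z => Real.exp ((1 + 2 * c / γ) * ‖z‖ ^ (1:ℝ)) := by
    intro ε hε
    apply IsBigO.of_bound (A * C * Real.exp 1)
    filter_upwards [(eventually_cobounded_le_norm (max 1 γ)).filter_mono inf_le_left,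
      (Filter.eventually_principal.2 (fun z (hz : z ∈ {z : ℂ | 0 < z.re}) => hz)).filter_mono
        inf_le_right] with w hwnorm hwre
    replace hwre : 0 < w.re := hwre
    have hw1 : (1:ℝ) ≤ ‖w‖ := le_trans (le_max_left _ _) hwnorm
    have hwγ : γ ≤ ‖w‖ := le_trans (le_max_right _ _) hwnorm
    have hure : 0 < (w + 1).re := by simp only [Complex.add_re, Complex.one_re]; linarith
    have hu0 : w + 1 ≠ 0 := fun h => by rw [h] at hure; simp at hure
    have hz0 : (γ:ℂ)/(w+1) ≠ 0 := div_ne_zero hγ0 hu0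
    have hre1 : 1 ≤ ((γ:ℂ)/((γ:ℂ)/(w+1))).re := by
      rw [PL_div_div _ _ hγ0]
      simp only [Complex.add_re, Complex.one_re]; linarith
    have hb1 : ‖F ((γ:ℂ)/(w+1))‖ ≤ A := h1 _ (hmaps w (by linarith))
    have hb2 : ‖Complex.exp (g ((γ:ℂ)/(w+1)))‖ ≤ C * Real.exp (c * (2 * ‖w‖ / γ)) := by
      refine le_trans (hg _ hz0 hre1) ?_
      have hwu : 0 < ‖w+1‖ := norm_pos_iff.2 hu0
      have e1 : ‖(γ:ℂ)/(w+1)‖ ^ (-β) = (‖w+1‖ / γ) ^ β := by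
        rw [PL_norm_div hγ.le, Real.rpow_neg (by positivity),
          ← Real.inv_rpow (by positivity), inv_div]
      have l1 : ‖w+1‖ ≤ 2*‖w‖ := by
        calc ‖w+1‖ ≤ ‖w‖ + ‖(1:ℂ)‖ := norm_add_le _ _
          _ = ‖w‖ + 1 := by rw [norm_one]
          _ ≤ 2*‖w‖ := by linarith
      have l2 : (‖w+1‖/γ)^β ≤ (2*‖w‖/γ)^β := by
        apply Real.rpow_le_rpow (by positivity) _ hβ0
        gcongr
      have l3 : (2*‖w‖/γ)^β ≤ 2*‖w‖/γ := by
        have hbase : 1 ≤ 2*‖w‖/γ := by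
          rw [le_div_iff₀ hγ]; nlinarith
        calc (2*‖w‖/γ)^β ≤ (2*‖w‖/γ)^(1:ℝ) := Real.rpow_le_rpow_of_exponent_le hbase hβ1.le
          _ = 2*‖w‖/γ := Real.rpow_one _
      gcongr
      rw [e1]
      exact l2.trans l3
    have hb3 : Real.exp ((w+1).re) ≤ Real.exp 1 * Real.exp ‖w‖ := by
      rw [← Real.exp_add]
      apply Real.exp_le_exp.2
      simp only [Complex.add_re, Complex.one_re]
      have : w.re ≤ ‖w‖ := by
        exact Complex.re_le_norm w
      linarith
    have hb4 : ‖2*(w+1)‖^(-ν) ≤ 1 := by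
      apply Real.rpow_le_one_of_one_le_of_nonpos _ (neg_nonpos.2 hν.le)
      rw [norm_mul]
      have h2n : ‖(2:ℂ)‖ = 2 := by norm_num
      have : (w+1).re ≤ ‖w+1‖ := by exact Complex.re_le_norm _
      simp only [Complex.add_re, Complex.one_re] at this
      rw [h2n]; nlinarith
    have hb5 : ‖Complex.exp (-(ε:ℂ) * (w+1) ^ (β':ℂ))‖ ≤ 1 := by
      rw [PL_norm_damp]
      have hRe : 0 ≤ ((w+1)^(β':ℂ)).re := PL_re_cpow_nonneg hure hβ'pos.le hβ'1.le
      calc Real.exp (-(ε * ((w+1)^(β':ℂ)).re)) ≤ Real.exp 0 :=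
            Real.exp_le_exp.2 (neg_nonpos.2 (mul_nonneg hε hRe))
        _ = 1 := Real.exp_zero
    calc ‖f w * Complex.exp (-(ε:ℂ) * (w+1) ^ (β':ℂ))‖
        = ‖F ((γ:ℂ)/(w+1))‖ * ‖Complex.exp (g ((γ:ℂ)/(w+1)))‖ * Real.exp ((w+1).re) *
            ‖2*(w+1)‖^(-ν) * ‖Complex.exp (-(ε:ℂ) * (w+1) ^ (β':ℂ))‖ := by
          rw [norm_mul, hnorm w hu0]
      _ ≤ A * (C * Real.exp (c * (2*‖w‖/γ))) * (Real.exp 1 * Real.exp ‖w‖) * 1 * 1 := by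
          gcongr
      _ = (A * C * Real.exp 1) * (Real.exp (c * (2*‖w‖/γ)) * Real.exp ‖w‖) := by ring
      _ = (A * C * Real.exp 1) * ‖Real.exp ((1 + 2*c/γ) * ‖w‖ ^ (1:ℝ))‖ := by
          have hee : c * (2*‖w‖/γ) + ‖w‖ = (1 + 2*c/γ) * ‖w‖ := by
            field_simp
            ring
          rw [Real.norm_of_nonneg (Real.exp_pos _).le, Real.rpow_one,
            ← Real.exp_add, hee]
    -- decay on the real axis
  have htends : ∀ ε : ℝ, 0 < ε →
      Tendsto (fun x : ℝ => f x * Complex.exp (-(ε:ℂ) * ((x:ℂ) + 1) ^ (β' : ℂ)))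
        atTop (nhds 0) := by
    intro ε hε
    apply squeeze_zero_norm'
      (a := fun x : ℝ => A * C * Real.exp (c / γ^β * (x+1)^β - ε*(x+1)^β'))
    · filter_upwards [eventually_ge_atTop (0:ℝ)] with x hx
      have hx1 : (0:ℝ) < x + 1 := by linarith
      have hcast : ((x:ℂ) + 1) = ((x + 1 : ℝ) : ℂ) := by push_cast; ring
      have hu0 : ((x:ℂ) + 1) ≠ 0 := by
        rw [hcast]
        exact Complex.ofReal_ne_zero.2 hx1.ne'
      have hzcast : (γ:ℂ)/((x:ℂ)+1) = ((γ/(x+1) : ℝ) : ℂ) := by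
        rw [hcast, Complex.ofReal_div]
      have ht0 : 0 < γ / (x+1) := by positivity
      have htγ : γ / (x+1) ≤ γ := div_le_self hγ.le (by linarith)
      have hFb : ‖F ((γ:ℂ)/((x:ℂ)+1))‖ ≤ A * Real.exp (-(x+1)) := by
        rw [hzcast]
        have hb := h2 _ ht0 htγ
        have htt : -γ / (γ/(x+1)) = -(x+1) := by
          rw [neg_div, PL_div_div γ (x+1) hγ.ne']
        rwa [htt] at hb
      have hgb : ‖Complex.exp (g ((γ:ℂ)/((x:ℂ)+1)))‖ ≤
          C * Real.exp (c / γ^β * (x+1)^β) := by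
        have hz0 : ((γ:ℂ)/((x:ℂ)+1)) ≠ 0 := div_ne_zero hγ0 hu0
        have hre1 : 1 ≤ ((γ:ℂ)/((γ:ℂ)/((x:ℂ)+1))).re := by
          rw [PL_div_div _ _ hγ0, hcast]
          rw [Complex.ofReal_re]; linarith
        refine le_trans (hg _ hz0 hre1) ?_
        have hnz : ‖(γ:ℂ)/((x:ℂ)+1)‖ = γ/(x+1) := by
          rw [PL_norm_div hγ.le, hcast, Complex.norm_real, Real.norm_of_nonneg hx1.le]
        have e2 : ‖(γ:ℂ)/((x:ℂ)+1)‖ ^ (-β) = (x+1)^β / γ^β := by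
          rw [hnz, Real.rpow_neg (by positivity), ← Real.inv_rpow (by positivity), inv_div,
            Real.div_rpow (by linarith) hγ.le]
        rw [e2]
        apply le_of_eq
        congr 1
        ring
      have hb4 : ‖2*((x:ℂ)+1)‖^(-ν) ≤ 1 := by
        apply Real.rpow_le_one_of_one_le_of_nonpos _ (neg_nonpos.2 hν.le)
        rw [norm_mul, hcast, Complex.norm_real, Real.norm_of_nonneg hx1.le]
        have h2n : ‖(2:ℂ)‖ = 2 := by norm_num
        rw [h2n]; linarith
      have hre : ((x:ℂ)+1).re = x + 1 := by simp
      have hcre : (((x:ℂ)+1) ^ (β':ℂ)).re = (x+1)^β' := by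
        rw [hcast, ← Complex.ofReal_cpow hx1.le, Complex.ofReal_re]
      calc ‖f x * Complex.exp (-(ε:ℂ) * ((x:ℂ) + 1) ^ (β' : ℂ))‖
          = ‖F ((γ:ℂ)/((x:ℂ)+1))‖ * ‖Complex.exp (g ((γ:ℂ)/((x:ℂ)+1)))‖ *
              Real.exp (x+1) * ‖2*((x:ℂ)+1)‖^(-ν) * Real.exp (-(ε*(x+1)^β')) := by
            rw [norm_mul, hnorm _ hu0, PL_norm_damp, hre, hcre]
        _ ≤ (A * Real.exp (-(x+1))) * (C * Real.exp (c / γ^β * (x+1)^β)) *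
              Real.exp (x+1) * 1 * Real.exp (-(ε*(x+1)^β')) := by gcongr
        _ = A * C * (Real.exp (-(x+1)) * Real.exp (c / γ^β * (x+1)^β) *
              Real.exp (x+1) * Real.exp (-(ε*(x+1)^β'))) := by ring
        _ = A * C * Real.exp (c / γ^β * (x+1)^β - ε*(x+1)^β') := by
            rw [← Real.exp_add, ← Real.exp_add, ← Real.exp_add]
            congr 1
            ring
    · have hbase : Tendsto (fun x:ℝ => x + 1) atTop atTop :=
        tendsto_atTop_add_const_right _ 1 tendsto_id
      have h8 : Tendsto (fun x:ℝ => (x+1)^(β'-β)) atTop atTop :=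
        (tendsto_rpow_atTop (by linarith)).comp hbase
      have hhalf : Tendsto (fun x:ℝ => -(ε/2 * (x+1)^β')) atTop atBot := by
        have h9 : Tendsto (fun x:ℝ => (x+1)^β') atTop atTop :=
          (tendsto_rpow_atTop hβ'pos).comp hbase
        exact tendsto_neg_atTop_atBot.comp (h9.const_mul_atTop (by positivity))
      have hexp : Tendsto (fun x:ℝ => c / γ^β * (x+1)^β - ε*(x+1)^β') atTop atBot := by
        apply tendsto_atBot_mono' atTop _ hhalf
        filter_upwards [h8.eventually_ge_atTop (2*(c / γ^β)/ε), eventually_ge_atTop (0:ℝ)]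
          with x hx hx0
        have hx1 : (0:ℝ) < x+1 := by linarith
        have hP : 0 < (x+1)^β := Real.rpow_pos_of_pos hx1 β
        have e1 : (x+1)^β * (x+1)^(β'-β) = (x+1)^β' := by
          rw [← Real.rpow_add hx1]; ring_nf
        have h2D : 2*(c / γ^β) ≤ ε * (x+1)^(β'-β) := by
          have := (div_le_iff₀ hε).1 hx
          linarith
        have key2 : 2*((c / γ^β)*(x+1)^β) ≤ ε*(x+1)^β' := by
          have hqq := mul_le_mul_of_nonneg_left h2D hP.le
          calc 2*((c / γ^β)*(x+1)^β) = (x+1)^β * (2*(c / γ^β)) := by ring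
            _ ≤ (x+1)^β * (ε*(x+1)^(β'-β)) := hqq
            _ = ε*((x+1)^β*(x+1)^(β'-β)) := by ring
            _ = ε*(x+1)^β' := by rw [e1]
        linarith
      have hfin : Tendsto (fun x:ℝ => A * C *
          Real.exp (c / γ^β * (x+1)^β - ε*(x+1)^β')) atTop (nhds (A*C*0)) :=
        (Real.tendsto_exp_atBot.comp hexp).const_mul (A*C)
      simpa using hfin
    -- bound on the imaginary axis
  have him : ∀ ε : ℝ, 0 ≤ ε → ∀ x : ℝ,
      ‖f ((x:ℂ)*Complex.I) * Complex.exp (-(ε:ℂ) * ((x:ℂ)*Complex.I + 1) ^ (β' : ℂ))‖ ≤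
        Real.exp 1 * B := by
    intro ε hε x
    have hure : ((x:ℂ)*Complex.I + 1).re = 1 := by simp
    have hu0 : ((x:ℂ)*Complex.I + 1) ≠ 0 := by
      intro h; rw [h] at hure; simp at hure
    rw [norm_mul, hnorm _ hu0, PL_norm_damp, hure]
    set u : ℂ := (x:ℂ)*Complex.I + 1 with hu
    set z : ℂ := (γ:ℂ)/u with hzd
    have hz0 : z ≠ 0 := div_ne_zero hγ0 hu0
    have hre1 : 1 ≤ ((γ:ℂ)/z).re := by rw [hzd, PL_div_div _ _ hγ0, hure]
    have hN : 0 < Complex.normSq u := Complex.normSq_pos.2 hu0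
    have hnu : 0 < ‖u‖ := norm_pos_iff.2 hu0
    have hzre : z.re / (4*γ) = 1/(4*Complex.normSq u) := by
      rw [hzd, PL_re_div, hure, mul_one]
      field_simp
    have h4N : 4 * Complex.normSq u = (2*‖u‖)^(2:ℕ) := by
      rw [Complex.normSq_eq_norm_sq]; ring
    have hrw : (z.re/(4*γ)) ^ (-(ν/2)) = (2*‖u‖)^ν := by
      rw [hzre, one_div, Real.inv_rpow (by positivity), Real.rpow_neg (by positivity), inv_inv,
        h4N, ← Real.rpow_natCast (2*‖u‖) 2, ← Real.rpow_mul (by positivity)]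
      congr 1
      ring
    have hFb := h3 z hz0 hre1
    rw [hrw] at hFb
    have hgeq : ‖Complex.exp (g z)‖ = Real.exp ((g z).re) := by
      rw [Complex.norm_exp]
    have hdampb : Real.exp (-(ε * ((u:ℂ) ^ (β':ℂ)).re)) ≤ 1 := by
      have hRe : 0 ≤ ((u:ℂ)^(β':ℂ)).re :=
        PL_re_cpow_nonneg (by rw [hure]; norm_num) hβ'pos.le hβ'1.le
      calc Real.exp (-(ε * ((u:ℂ)^(β':ℂ)).re)) ≤ Real.exp 0 :=
            Real.exp_le_exp.2 (neg_nonpos.2 (mul_nonneg hε hRe))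
        _ = 1 := Real.exp_zero
    have h2u : ‖2*u‖ = 2*‖u‖ := by
      rw [norm_mul]
      norm_num
    rw [h2u, hgeq]
    calc ‖F z‖ * Real.exp ((g z).re) * Real.exp 1 * (2*‖u‖)^(-ν) *
          Real.exp (-(ε * ((u:ℂ)^(β':ℂ)).re))
        ≤ (B * (2*‖u‖)^ν * Real.exp (-((g z).re))) * Real.exp ((g z).re) * Real.exp 1 *
            (2*‖u‖)^(-ν) * 1 := by gcongr
      _ = Real.exp 1 * B * ((2*‖u‖)^ν * (2*‖u‖)^(-ν)) *
            (Real.exp (-((g z).re)) * Real.exp ((g z).re)) := by ring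
      _ = Real.exp 1 * B := by
          rw [← Real.rpow_add (by positivity), ← Real.exp_add]
          simp
    -- Phragmen-Lindelof conclusion for f
  have key : ∀ w : ℂ, 0 ≤ w.re → ‖f w‖ ≤ Real.exp 1 * B := by
    intro w hw
    set R : ℝ := ((w+1) ^ (β':ℂ)).re with hR
    have hεbound : ∀ ε : ℝ, 0 < ε → ‖f w‖ ≤ (Real.exp 1 * B) * Real.exp (ε * R) := by
      intro ε hε
      have h := PhragmenLindelof.right_half_plane_of_tendsto_zero_on_real (hdiff ε)
        ⟨1, one_lt_two, 1 + 2*c/γ, hgrowth ε hε.le⟩ (htends ε hε) (him ε hε.le) hw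
      rw [norm_mul, PL_norm_damp] at h
      have h' := mul_le_mul_of_nonneg_right h (Real.exp_pos (ε * R)).le
      rwa [mul_assoc, ← Real.exp_add, neg_add_cancel, Real.exp_zero, mul_one] at h'
    have hlim : Tendsto (fun ε : ℝ => (Real.exp 1 * B) * Real.exp (ε * R))
        (nhdsWithin 0 (Set.Ioi 0)) (nhds (Real.exp 1 * B)) := by
      have hcont : Continuous fun ε : ℝ => (Real.exp 1 * B) * Real.exp (ε * R) :=
        continuous_const.mul (Real.continuous_exp.comp (continuous_id.mul continuous_const))
      have := hcont.tendsto 0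
      simp only [zero_mul, Real.exp_zero, mul_one] at this
      exact this.mono_left nhdsWithin_le_nhds
    refine ge_of_tendsto hlim ?_
    filter_upwards [eventually_mem_nhdsWithin] with ε hε
    exact hεbound ε hε
  -- unwind
  intro z hz hz1
  have hu0 : (γ:ℂ)/z ≠ 0 := by
    intro h
    rw [h] at hz1
    simp only [Complex.zero_re] at hz1
    linarith
  have hw : (0:ℝ) ≤ ((γ:ℂ)/z - 1).re := by
    simp only [Complex.sub_re, Complex.one_re]; linarith
  have hk := key ((γ:ℂ)/z - 1) hw
  have hadd : (γ:ℂ)/z - 1 + 1 = (γ:ℂ)/z := sub_add_cancel _ _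
  rw [hnorm _ (by rw [hadd]; exact hu0)] at hk
  rw [hadd, PL_div_div _ _ hγ0] at hk
  have hzn : 0 < ‖z‖ := norm_pos_iff.2 hz
  have h2u : ‖2*((γ:ℂ)/z)‖ = 2*γ/‖z‖ := by
    rw [norm_mul, PL_norm_div hγ.le]
    have h2n : ‖(2:ℂ)‖ = 2 := by norm_num
    rw [h2n, mul_div_assoc]
  have hgeq : ‖Complex.exp (g z)‖ = Real.exp ((g z).re) := by
    rw [Complex.norm_exp]
  rw [h2u, hgeq] at hk
  have hr : 0 < 2*γ/‖z‖ := by positivity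
  have hid : ‖F z‖ = (‖F z‖ * Real.exp ((g z).re) * Real.exp (((γ:ℂ)/z).re) * (2*γ/‖z‖)^(-ν)) *
      ((2*γ/‖z‖)^ν * Real.exp (-((g z).re) - ((γ:ℂ)/z).re)) := by
    rw [Real.rpow_neg hr.le,
      show -((g z).re) - ((γ:ℂ)/z).re = -(((g z).re) + ((γ:ℂ)/z).re) from by ring,
      Real.exp_neg, Real.exp_add]
    have e1 : Real.exp ((g z).re) ≠ 0 := Real.exp_ne_zero _
    have e2 : Real.exp (((γ:ℂ)/z).re) ≠ 0 := Real.exp_ne_zero _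
    have e3 : (2*γ/‖z‖)^ν ≠ 0 := (Real.rpow_pos_of_pos hr ν).ne'
    have e3' : (2 * γ / ‖z‖) ^ ν ≠ 0 := e3
    field_simp
  calc ‖F z‖ = (‖F z‖ * Real.exp ((g z).re) * Real.exp (((γ:ℂ)/z).re) * (2*γ/‖z‖)^(-ν)) *
      ((2*γ/‖z‖)^ν * Real.exp (-((g z).re) - ((γ:ℂ)/z).re)) := hid
    _ ≤ (Real.exp 1 * B) * ((2*γ/‖z‖)^ν * Real.exp (-((g z).re) - ((γ:ℂ)/z).re)) := by
        apply mul_le_mul_of_nonneg_right hk (by positivity)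
    _ = Real.exp 1 * B * (2 * γ / ‖z‖) ^ ν * Real.exp (-((g z).re) - ((γ:ℂ)/z).re) := by
        ring
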